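/- Let q be a prime power, k ≥ 6 an integer, and t = ⌊(k+2)/4⌋. For every vector c = (c_2, c_3, ..., c_t) ∈ GF(q)^{t−1}, the point (p) of D(k,q) whose coordinates are all zero except that p'_{ii} = −c_i for 2 ≤ i ≤ t satisfies a(p) = c. In particular, the map a from vertices of D(k,q) to GF(q)^{t−1} is surjective, and every vector of GF(q)^{t−1} is the common a-value of some connected component of D(k,q). -/

import Mathlib

/-- Extend a vector `Fin k → F` to `ℕ → F` by zeros. -/
def extD {F : Type} [Zero F] {k : ℕ} (v : Fin k → F) : ℕ → F :=
  fun m => if h : m < k then v ⟨m, h⟩ else 0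

/-- Right-hand side of the `m`-th incidence equation of `D(k,q)`
(coordinates are numbered from `0`, so the `m`-th equation concerns the
coordinate with index `m`). -/
def rhsD {F : Type} [Mul F] (p l : ℕ → F) : ℕ → F
  | 1 => l 0 * p 0
  | 2 => l 1 * p 0
  | m => if m % 4 = 0 ∨ m % 4 = 3 then l 0 * p (m - 2) else l (m - 2) * p 0

/-- The incidence relation between a point `p` and a line `l`:
the first `k - 1` incidence equations hold. -/
def incD {F : Type} [Field F] (k : ℕ) (p l : Fin k → F) : Prop :=
  ∀ m, 1 ≤ m → m < k → extD l m - extD p m = rhsD (extD p) (extD l) m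

/-- The bipartite graph `D(k,q)`; vertices are points (`Sum.inl`) and
lines (`Sum.inr`), both copies of `GF(q)^k`. -/
def DGraph (k : ℕ) (F : Type) [Field F] :
    SimpleGraph ((Fin k → F) ⊕ (Fin k → F)) where
  Adj x y :=
    match x, y with
    | Sum.inl p, Sum.inr l => incD k p l
    | Sum.inr l, Sum.inl p => incD k p l
    | Sum.inl _, Sum.inl _ => False
    | Sum.inr _, Sum.inr _ => False
  symm := by constructor; rintro (p | l) (p' | l') h <;> exact h
  loopless := by constructor; rintro (p | l) h <;> exact h


/-- `u_{ii}` (with the convention `u_{00} = -1`). -/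
def ddD {F : Type} [Field F] (u : ℕ → F) : ℕ → F
  | 0 => -1
  | 1 => u 1
  | (i + 2) => u (4 * i + 4)

/-- `u'_{ii}` (with the conventions `u'_{00} = 1`, `u'_{11} = u_{11}`). -/
def dd'D {F : Type} [Field F] (u : ℕ → F) : ℕ → F
  | 0 => 1
  | 1 => u 1
  | (i + 2) => u (4 * i + 5)

/-- `u_{i,i+1}`; for a point `p_{01} = p_1`, for a line `l_{01} = 0`. -/
def hiD {F : Type} [Field F] (isPt : Bool) (u : ℕ → F) : ℕ → F
  | 0 => if isPt then u 0 else 0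
  | 1 => u 2
  | (i + 2) => u (4 * i + 6)

/-- `u_{i,i-1}`; `u_{0,-1} = 0`, and for a point `p_{10} = 0`,
for a line `l_{10} = l_1`. -/
def loD {F : Type} [Field F] (isPt : Bool) (u : ℕ → F) : ℕ → F
  | 0 => 0
  | 1 => if isPt then 0 else u 0
  | (i + 2) => u (4 * i + 3)

/-- The invariant `a_r(x)` of a vertex `x` of `D(k,q)`. -/
def aD {F : Type} [Field F] {k : ℕ} (r : ℕ) (x : (Fin k → F) ⊕ (Fin k → F)) : F :=
  ∑ i ∈ Finset.range (r + 1),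
    (ddD (extD (Sum.elim id id x)) i * dd'D (extD (Sum.elim id id x)) (r - i) -
      hiD x.isLeft (extD (Sum.elim id id x)) i * loD x.isLeft (extD (Sum.elim id id x)) (r - i))

/-- The vector `a(x) = (a_2(x), …, a_t(x))`. -/
def aVecD {F : Type} [Field F] {k : ℕ} (t : ℕ) (x : (Fin k → F) ⊕ (Fin k → F)) :
    Fin (t - 1) → F :=
  fun j => aD (j.val + 2) x


namespace D7aux

variable {F : Type} [Field F]

def SS (n : ℕ) (f g : ℕ → F) : F := ∑ i ∈ Finset.range (n+1), f i * g (n - i)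

lemma SS_peel (n : ℕ) (f g : ℕ → F) :
    SS (n+1) f g = SS n (fun i => f (i+1)) g + f 0 * g (n+1) := by
  rw [SS, Finset.sum_range_succ', SS]
  simp [Nat.succ_sub_succ]

lemma SS_drop (n : ℕ) (f g : ℕ → F) (hg : g 0 = 0) :
    SS (n+1) f g = SS n f (fun m => g (m+1)) := by
  rw [SS, Finset.sum_range_succ, Nat.sub_self, hg, mul_zero, add_zero, SS]
  refine Finset.sum_congr rfl fun i hi => ?_
  rw [Finset.mem_range] at hi
  have h' : n + 1 - i = n - i + 1 := by omega
  rw [h']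

lemma SS_expand_r (n : ℕ) (f g g₁ g₂ : ℕ → F) (cc : F)
    (hg : ∀ i ≤ n, g i = g₁ i + g₂ i * cc) :
    SS n f g = SS n f g₁ + SS n f g₂ * cc := by
  simp only [SS, Finset.sum_mul, ← Finset.sum_add_distrib]
  refine Finset.sum_congr rfl fun i hi => ?_
  rw [hg (n - i) (by omega)]
  ring

lemma SS_expand_l (n : ℕ) (f f₁ f₂ g : ℕ → F) (cc : F)
    (hf : ∀ i ≤ n, f i = f₁ i + cc * f₂ i) :
    SS n f g = SS n f₁ g + cc * SS n f₂ g := by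
  simp only [SS, Finset.mul_sum, ← Finset.sum_add_distrib]
  refine Finset.sum_congr rfl fun i hi => ?_
  rw [Finset.mem_range] at hi
  rw [hf i (by omega)]
  ring

lemma absInv (u : ℕ) (A A' B C a a' b cL : ℕ → F) (l0 p0 : F)
    (h1 : ∀ i ≤ u+1, a (i+1) = A (i+1) + l0 * B i)
    (h2 : ∀ i ≤ u+2, a' i = A' i + cL i * p0)
    (h3 : ∀ i ≤ u+1, b i = B i + a i * p0)
    (h4 : ∀ i ≤ u+1, cL (i+1) = C (i+1) + A' i * l0)
    (ha0 : a 0 = A 0) (hc0 : cL 0 = 0) (hC0 : C 0 = 0) :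
    SS (u+2) a a' - SS (u+2) b cL = SS (u+2) A A' - SS (u+2) B C := by
  have P1 : SS (u+2) a a' = SS (u+1) (fun i => a (i+1)) a' + a 0 * a' (u+2) :=
    SS_peel (u+1) a a'
  have P2 : SS (u+1) (fun i => a (i+1)) a'
      = SS (u+1) (fun i => A (i+1)) a' + l0 * SS (u+1) B a' :=
    SS_expand_l (u+1) _ _ B a' l0 h1
  have P3 : SS (u+2) A a' = SS (u+1) (fun i => A (i+1)) a' + A 0 * a' (u+2) :=
    SS_peel (u+1) A a'
  have P4 : SS (u+2) A a' = SS (u+2) A A' + SS (u+2) A cL * p0 :=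
    SS_expand_r (u+2) A a' A' cL p0 h2
  have P5 : SS (u+1) B a' = SS (u+1) B A' + SS (u+1) B cL * p0 :=
    SS_expand_r (u+1) B a' A' cL p0 (fun i hi => h2 i (by omega))
  have P6 : SS (u+2) A cL = SS (u+1) A (fun m => cL (m+1)) := SS_drop (u+1) A cL hc0
  have P7 : SS (u+1) A (fun m => cL (m+1))
      = SS (u+1) A (fun m => C (m+1)) + SS (u+1) A A' * l0 :=
    SS_expand_r (u+1) A _ _ A' l0 h4
  have P8 : SS (u+1) B cL = SS u B (fun m => cL (m+1)) := SS_drop u B cL hc0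
  have P9 : SS u B (fun m => cL (m+1))
      = SS u B (fun m => C (m+1)) + SS u B A' * l0 :=
    SS_expand_r u B _ _ A' l0 (fun i hi => h4 i (by omega))
  have P10 : SS (u+2) b cL = SS (u+1) b (fun m => cL (m+1)) := SS_drop (u+1) b cL hc0
  have P11 : SS (u+1) b (fun m => cL (m+1))
      = SS (u+1) B (fun m => cL (m+1)) + p0 * SS (u+1) a (fun m => cL (m+1)) :=
    SS_expand_l (u+1) b B a _ p0 (fun i hi => by rw [h3 i hi]; ring)
  have P12 : SS (u+1) B (fun m => cL (m+1))
      = SS (u+1) B (fun m => C (m+1)) + SS (u+1) B A' * l0 :=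
    SS_expand_r (u+1) B _ _ A' l0 h4
  have P13 : SS (u+1) a (fun m => cL (m+1))
      = SS (u+1) a (fun m => C (m+1)) + SS (u+1) a A' * l0 :=
    SS_expand_r (u+1) a _ _ A' l0 h4
  have P14 : SS (u+1) a (fun m => C (m+1))
      = SS u (fun i => a (i+1)) (fun m => C (m+1)) + a 0 * C (u+2) :=
    SS_peel u a (fun m => C (m+1))
  have P15 : SS u (fun i => a (i+1)) (fun m => C (m+1))
      = SS u (fun i => A (i+1)) (fun m => C (m+1)) + l0 * SS u B (fun m => C (m+1)) :=
    SS_expand_l u _ _ B _ l0 (fun i hi => h1 i (by omega))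
  have P16 : SS (u+1) A (fun m => C (m+1))
      = SS u (fun i => A (i+1)) (fun m => C (m+1)) + A 0 * C (u+2) :=
    SS_peel u A (fun m => C (m+1))
  have P17 : SS (u+1) a A' = SS u (fun i => a (i+1)) A' + a 0 * A' (u+1) :=
    SS_peel u a A'
  have P18 : SS u (fun i => a (i+1)) A'
      = SS u (fun i => A (i+1)) A' + l0 * SS u B A' :=
    SS_expand_l u _ _ B A' l0 (fun i hi => h1 i (by omega))
  have P19 : SS (u+1) A A' = SS u (fun i => A (i+1)) A' + A 0 * A' (u+1) :=
    SS_peel u A A'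
  have P20 : SS (u+2) B C = SS (u+1) B (fun m => C (m+1)) := SS_drop (u+1) B C hC0
  have g1 : SS (u+2) a a' = SS (u+2) A a' + l0 * SS (u+1) B a' := by
    linear_combination P1 + P2 - P3 + a' (u+2) * ha0
  have g4 : SS (u+2) A cL = SS (u+1) A (fun m => C (m+1)) + SS (u+1) A A' * l0 := by
    linear_combination P6 + P7
  have g10 : SS (u+1) B cL = SS u B (fun m => C (m+1)) + SS u B A' * l0 := by
    linear_combination P8 + P9
  have g5' : SS (u+2) b cL = SS (u+1) B (fun m => C (m+1)) + SS (u+1) B A' * l0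
      + p0 * (SS (u+1) a (fun m => C (m+1)) + SS (u+1) a A' * l0) := by
    linear_combination P10 + P11 + P12 + p0 * P13
  have g8 : SS (u+1) a (fun m => C (m+1))
      = SS (u+1) A (fun m => C (m+1)) + l0 * SS u B (fun m => C (m+1)) := by
    linear_combination P14 + P15 - P16 + C (u+2) * ha0
  have g9 : SS (u+1) a A' = SS (u+1) A A' + l0 * SS u B A' := by
    linear_combination P17 + P18 - P19 + A' (u+1) * ha0
  linear_combination g1 + P4 + l0 * P5 + p0 * g4 + l0 * p0 * g10 - g5' - p0 * g8 - p0 * l0 * g9 + P20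

lemma rhsD_big {F : Type} [Mul F] (P L : ℕ → F) (m : ℕ) :
    rhsD P L (m+3) = if (m+3) % 4 = 0 ∨ (m+3) % 4 = 3 then L 0 * P (m+1) else L (m+1) * P 0 := rfl

lemma aD_adj {k : ℕ} (hk : 6 ≤ k) (p l : Fin k → F) (h : incD k p l)
    (u : ℕ) (hu : 4 * (u + 2) ≤ k + 2) :
    aD (u+2) (Sum.inl p : (Fin k → F) ⊕ (Fin k → F)) = aD (u+2) (Sum.inr l) := by
  have H : ∀ m, 1 ≤ m → m < k → extD l m - extD p m = rhsD (extD p) (extD l) m := h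
  have h1 : ∀ i ≤ u+1, ddD (extD l) (i+1) = ddD (extD p) (i+1) + extD l 0 * hiD true (extD p) i := by
    intro i hi
    match i with
    | 0 =>
      have e : extD l 1 - extD p 1 = extD l 0 * extD p 0 := H 1 (by omega) (by omega)
      show extD l 1 = extD p 1 + extD l 0 * extD p 0
      linear_combination e
    | 1 =>
      have e : extD l 4 - extD p 4 = extD l 0 * extD p 2 := H 4 (by omega) (by omega)
      show extD l 4 = extD p 4 + extD l 0 * extD p 2
      linear_combination e
    | (j+2) =>
      have e0 := H (4*j+8) (by omega) (by omega)
      rw [show (4*j+8) = (4*j+5)+3 from by omega, rhsD_big,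
        if_pos (Or.inl (by omega : (4*j+5+3) % 4 = 0))] at e0
      show extD l (4*j+5+3) = extD p (4*j+5+3) + extD l 0 * extD p (4*j+5+1)
      linear_combination e0
  have h2 : ∀ i ≤ u+2, dd'D (extD l) i = dd'D (extD p) i + loD false (extD l) i * extD p 0 := by
    intro i hi
    match i with
    | 0 => show (1:F) = 1 + 0 * extD p 0; ring
    | 1 =>
      have e : extD l 1 - extD p 1 = extD l 0 * extD p 0 := H 1 (by omega) (by omega)
      show extD l 1 = extD p 1 + extD l 0 * extD p 0
      linear_combination e
    | (j+2) =>
      have e0 := H (4*j+5) (by omega) (by omega)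
      rw [show (4*j+5) = (4*j+2)+3 from by omega, rhsD_big,
        if_neg (by omega : ¬((4*j+2+3) % 4 = 0 ∨ (4*j+2+3) % 4 = 3))] at e0
      show extD l (4*j+2+3) = extD p (4*j+2+3) + extD l (4*j+2+1) * extD p 0
      linear_combination e0
  have h3 : ∀ i ≤ u+1, hiD false (extD l) i = hiD true (extD p) i + ddD (extD l) i * extD p 0 := by
    intro i hi
    match i with
    | 0 => show (0:F) = extD p 0 + (-1) * extD p 0; ring
    | 1 =>
      have e : extD l 2 - extD p 2 = extD l 1 * extD p 0 := H 2 (by omega) (by omega)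
      show extD l 2 = extD p 2 + extD l 1 * extD p 0
      linear_combination e
    | (j+2) =>
      have e0 := H (4*j+6) (by omega) (by omega)
      rw [show (4*j+6) = (4*j+3)+3 from by omega, rhsD_big,
        if_neg (by omega : ¬((4*j+3+3) % 4 = 0 ∨ (4*j+3+3) % 4 = 3))] at e0
      show extD l (4*j+3+3) = extD p (4*j+3+3) + extD l (4*j+3+1) * extD p 0
      linear_combination e0
  have h4 : ∀ i ≤ u+1, loD false (extD l) (i+1) = loD true (extD p) (i+1) + dd'D (extD p) i * extD l 0 := by
    intro i hi
    match i with
    | 0 => show extD l 0 = 0 + 1 * extD l 0; ring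
    | 1 =>
      have e : extD l 3 - extD p 3 = extD l 0 * extD p 1 := H 3 (by omega) (by omega)
      show extD l 3 = extD p 3 + extD p 1 * extD l 0
      linear_combination e
    | (j+2) =>
      have e0 := H (4*j+7) (by omega) (by omega)
      rw [show (4*j+7) = (4*j+4)+3 from by omega, rhsD_big,
        if_pos (Or.inr (by omega : (4*j+4+3) % 4 = 3))] at e0
      show extD l (4*j+4+3) = extD p (4*j+4+3) + extD p (4*j+4+1) * extD l 0
      linear_combination e0
  have key := absInv u (ddD (extD p)) (dd'D (extD p)) (hiD true (extD p)) (loD true (extD p))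
    (ddD (extD l)) (dd'D (extD l)) (hiD false (extD l)) (loD false (extD l))
    (extD l 0) (extD p 0) h1 h2 h3 h4 rfl rfl rfl
  simp only [aD, Sum.elim_inl, Sum.elim_inr, id_eq, Sum.isLeft_inl, Sum.isLeft_inr]
  rw [Finset.sum_sub_distrib, Finset.sum_sub_distrib]
  simpa [SS] using key.symm
lemma aMain {k : ℕ} (hk : 6 ≤ k) (c : Fin ((k + 2) / 4 - 1) → F) :
    aVecD ((k + 2) / 4)
        (Sum.inl (fun m : Fin k =>
          ∑ j : Fin ((k + 2) / 4 - 1),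
            if m.val = 4 * (j.val + 2) - 3 then -c j else 0) :
          (Fin k → F) ⊕ (Fin k → F)) = c := by
  have hdiv : (k+2)/4*4 ≤ k+2 := Nat.div_mul_le_self _ _
  have hdiv2 : 2 ≤ (k+2)/4 := by omega
  set p₀ : Fin k → F := fun m =>
      ∑ j : Fin ((k + 2) / 4 - 1), if m.val = 4 * (j.val + 2) - 3 then -c j else 0 with hp₀
  have hzero : ∀ n : ℕ, (∀ j : Fin ((k + 2) / 4 - 1), n ≠ 4*j.val+5) → extD p₀ n = 0 := by
    intro n hn
    by_cases hnk : n < k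
    · rw [show extD p₀ n = p₀ ⟨n, hnk⟩ from dif_pos hnk]
      show (∑ j : Fin ((k + 2) / 4 - 1), if n = 4 * (j.val + 2) - 3 then -c j else 0) = 0
      apply Finset.sum_eq_zero
      intro j _
      rw [if_neg]
      exact fun hh => hn j (by omega)
    · exact dif_neg hnk
  have hval : ∀ j : Fin ((k + 2) / 4 - 1), extD p₀ (4*j.val+5) = -c j := by
    intro j
    have hj := j.isLt
    have hlt : 4*j.val+5 < k := by omega
    rw [show extD p₀ (4*j.val+5) = p₀ ⟨4*j.val+5, hlt⟩ from dif_pos hlt]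
    show (∑ j' : Fin ((k + 2) / 4 - 1),
        if 4*j.val+5 = 4 * (j'.val + 2) - 3 then -c j' else 0) = -c j
    rw [Fintype.sum_eq_single j (fun j' hj' => if_neg (fun hh => hj' (Fin.ext (by omega))))]
    exact if_pos (by omega)
  funext j0
  have hj0 := j0.isLt
  show aD ((j0:ℕ)+2) (Sum.inl p₀) = c j0
  simp only [aD, Sum.elim_inl, id_eq, Sum.isLeft_inl]
  rw [Finset.sum_eq_single_of_mem 0 (Finset.mem_range.mpr (by omega))]
  · have e0 : extD p₀ 0 = 0 := hzero 0 (fun j => by omega)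
    have e1 : extD p₀ (4*(j0:ℕ)+5) = -c j0 := hval j0
    show (-1 : F) * extD p₀ (4*(j0:ℕ)+5) - extD p₀ 0 * loD true (extD p₀) ((j0:ℕ)+2-0) = c j0
    rw [e0, e1]; ring
  · intro i hi hne
    match i with
    | 0 => exact absurd rfl hne
    | 1 =>
      have z1 : extD p₀ 1 = 0 := hzero 1 (fun j => by omega)
      have z2 : extD p₀ 2 = 0 := hzero 2 (fun j => by omega)
      show extD p₀ 1 * dd'D (extD p₀) ((j0:ℕ)+2-1) - extD p₀ 2 * loD true (extD p₀) ((j0:ℕ)+2-1) = 0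
      rw [z1, z2]; ring
    | (i'+2) =>
      have z1 : extD p₀ (4*i'+4) = 0 := hzero _ (fun j => by omega)
      have z2 : extD p₀ (4*i'+6) = 0 := hzero _ (fun j => by omega)
      show extD p₀ (4*i'+4) * dd'D (extD p₀) ((j0:ℕ)+2-(i'+2))
          - extD p₀ (4*i'+6) * loD true (extD p₀) ((j0:ℕ)+2-(i'+2)) = 0
      rw [z1, z2]; ring


lemma aVec_adj {k : ℕ} (hk : 6 ≤ k) {x y : (Fin k → F) ⊕ (Fin k → F)}
    (h : (DGraph k F).Adj x y) :
    aVecD ((k + 2) / 4) x = aVecD ((k + 2) / 4) y := by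
  have hdiv : (k+2)/4*4 ≤ k+2 := Nat.div_mul_le_self _ _
  have hb : ∀ (p l : Fin k → F), incD k p l →
      aVecD ((k + 2) / 4) (Sum.inl p : (Fin k → F) ⊕ (Fin k → F))
        = aVecD ((k + 2) / 4) (Sum.inr l) := by
    intro p l hpl
    funext j
    have hj := j.isLt
    exact aD_adj hk p l hpl j.val (by omega)
  match x, y, h with
  | Sum.inl p, Sum.inr l, h => exact hb p l h
  | Sum.inr l, Sum.inl p, h => exact (hb p l h).symm
  | Sum.inl _, Sum.inl _, h => exact absurd h (by simp [DGraph])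
  | Sum.inr _, Sum.inr _, h => exact absurd h (by simp [DGraph])

lemma aVec_reach {k : ℕ} (hk : 6 ≤ k) {x y : (Fin k → F) ⊕ (Fin k → F)}
    (h : (DGraph k F).Reachable x y) :
    aVecD ((k + 2) / 4) x = aVecD ((k + 2) / 4) y := by
  obtain ⟨w⟩ := h
  induction w with
  | nil => rfl
  | cons hab _ ih => exact (aVec_adj hk hab).trans ih

end D7aux

/-- For `k ≥ 6` and `t = ⌊(k+2)/4⌋`, every vector `c ∈ GF(q)^(t-1)` is attained
as the `a`-value of the point whose coordinates are all zero except
`p'_{ii} = -c_i` for `2 ≤ i ≤ t` (the coordinate `p'_{ii}` having index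
`4*i - 3` when coordinates are numbered from `0`). In particular `a` is
surjective and every vector is the common `a`-value of some connected
component. -/
theorem statement7 (q k : ℕ) (hk : 6 ≤ k) (F : Type) [Field F] [Fintype F]
    (hF : Fintype.card F = q) (c : Fin ((k + 2) / 4 - 1) → F) :
    aVecD ((k + 2) / 4)
        (Sum.inl (fun m : Fin k =>
          ∑ j : Fin ((k + 2) / 4 - 1),
            if m.val = 4 * (j.val + 2) - 3 then -c j else 0)) = c ∧
    Function.Surjective
      (aVecD ((k + 2) / 4) :
        (Fin k → F) ⊕ (Fin k → F) → Fin ((k + 2) / 4 - 1) → F) ∧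
    ∃ C : (DGraph k F).ConnectedComponent,
      ∀ x, (DGraph k F).connectedComponentMk x = C →
        aVecD ((k + 2) / 4) x = c := by
  have hmain : ∀ c' : Fin ((k + 2) / 4 - 1) → F,
      aVecD ((k + 2) / 4)
        (Sum.inl (fun m : Fin k =>
          ∑ j : Fin ((k + 2) / 4 - 1),
            if m.val = 4 * (j.val + 2) - 3 then -c' j else 0) :
          (Fin k → F) ⊕ (Fin k → F)) = c' := fun c' => D7aux.aMain hk c'
  refine ⟨hmain c, fun c' => ⟨_, hmain c'⟩,
    (DGraph k F).connectedComponentMk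
      (Sum.inl (fun m : Fin k =>
        ∑ j : Fin ((k + 2) / 4 - 1),
          if m.val = 4 * (j.val + 2) - 3 then -c j else 0)), ?_⟩
  intro x hx
  have hr := SimpleGraph.ConnectedComponent.eq.mp hx
  exact (D7aux.aVec_reach hk hr).trans (hmain c)
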